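/- If ‖φ(y)‖ ≤ R and Δ(y) ∈ [0,1] for all y in a finite set Y, then the gradient of the expected loss J(w) = Σ_y Δ(y) p_w(y) under the Gibbs distribution is Lipschitz continuous: there exists L ≥ 0 (one may take L = 8R²|Y|, or any valid constant) such that ‖∇J(w) − ∇J(w')‖ ≤ L‖w − w'‖ for all w, w'. -/

import Mathlib

open scoped RealInnerProductSpace BigOperators Classical

set_option synthInstance.maxHeartbeats 1000000
set_option maxHeartbeats 1000000

namespace GradLipAux

variable {F : Type*} [NormedAddCommGroup F] [InnerProductSpace ℝ F]
variable {Y : Type*} [Fintype Y] [Nonempty Y]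

noncomputable def Ssum (φ : Y → F) (w : F) : ℝ := ∑ y, Real.exp ⟪w, φ y⟫

noncomputable def pf (φ : Y → F) (y : Y) (w : F) : ℝ := Real.exp ⟪w, φ y⟫ / Ssum φ w

lemma Ssum_pos (φ : Y → F) (w : F) : 0 < Ssum φ w :=
  Finset.sum_pos (fun y _ => Real.exp_pos _) Finset.univ_nonempty

lemma pf_nonneg (φ : Y → F) (y : Y) (w : F) : 0 ≤ pf φ y w :=
  div_nonneg (Real.exp_pos _).le (Ssum_pos φ w).le

lemma pf_le_one (φ : Y → F) (y : Y) (w : F) : pf φ y w ≤ 1 := by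
  rw [pf, div_le_one (Ssum_pos φ w)]
  exact Finset.single_le_sum (f := fun y' => Real.exp ⟪w, φ y'⟫)
    (fun y _ => (Real.exp_pos _).le) (Finset.mem_univ y)

lemma hasFDerivAt_exp_inner (v : F) (w : F) :
    HasFDerivAt (fun w : F => Real.exp ⟪w, v⟫) (Real.exp ⟪w, v⟫ • innerSL ℝ v) w := by
  have h1 : (fun w : F => ⟪w, v⟫) = fun w => innerSL ℝ v w :=
    funext fun w => real_inner_comm _ _
  have h : HasFDerivAt (fun w : F => ⟪w, v⟫) (innerSL ℝ v) w :=
    h1 ▸ (innerSL ℝ v).hasFDerivAt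
  exact h.exp

noncomputable def DS (φ : Y → F) (w : F) : F →L[ℝ] ℝ :=
  ∑ y, Real.exp ⟪w, φ y⟫ • innerSL ℝ (φ y)

lemma hasFDerivAt_Ssum (φ : Y → F) (w : F) :
    HasFDerivAt (Ssum φ) (DS φ w) w :=
  HasFDerivAt.fun_sum fun y _ => hasFDerivAt_exp_inner (φ y) w

noncomputable def qc (φ : Y → F) (y y' : Y) (w : F) : ℝ :=
  (if y' = y then pf φ y w else 0) - pf φ y w * pf φ y' w

noncomputable def Dp (φ : Y → F) (y : Y) (w : F) : F →L[ℝ] ℝ :=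
  ∑ y', qc φ y y' w • innerSL ℝ (φ y')

lemma hasFDerivAt_pf (φ : Y → F) (y : Y) (w : F) :
    HasFDerivAt (pf φ y) (Dp φ y w) w := by
  have hS0 : Ssum φ w ≠ 0 := (Ssum_pos φ w).ne'
  have he := hasFDerivAt_exp_inner (φ y) w
  have hS := hasFDerivAt_Ssum φ w
  have hInv : HasFDerivAt (fun w => (Ssum φ w)⁻¹) ((-(Ssum φ w ^ 2)⁻¹) • DS φ w) w :=
    (hasDerivAt_inv hS0).comp_hasFDerivAt w hS
  have hmul := he.mul hInv
  have hfun : pf φ y = fun w => Real.exp ⟪w, φ y⟫ * (Ssum φ w)⁻¹ :=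
    funext fun w => div_eq_mul_inv _ _
  rw [hfun]
  refine hmul.congr_fderiv ?_
  ext x
  simp only [ContinuousLinearMap.add_apply, ContinuousLinearMap.coe_smul',
    Pi.smul_apply, ContinuousLinearMap.coe_sum', Finset.sum_apply, Dp, qc, pf, DS,
    innerSL_apply_apply, smul_eq_mul]
  simp only [sub_mul, ite_mul, zero_mul, Finset.sum_sub_distrib, Finset.sum_ite_eq',
    Finset.mem_univ, if_true]
  have hD : ∑ y' : Y, Real.exp ⟪w, φ y⟫ / Ssum φ w * (Real.exp ⟪w, φ y'⟫ / Ssum φ w) * ⟪φ y', x⟫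
      = Real.exp ⟪w, φ y⟫ * ((Ssum φ w ^ 2)⁻¹ * ∑ y' : Y, Real.exp ⟪w, φ y'⟫ * ⟪φ y', x⟫) := by
    rw [Finset.mul_sum, Finset.mul_sum]
    refine Finset.sum_congr rfl fun y' _ => ?_
    field_simp
  rw [hD]
  field_simp
  ring

/-- norm bound on `Dp` -/
lemma abs_qc_le (φ : Y → F) (y y' : Y) (w : F) : |qc φ y y' w| ≤ 2 := by
  have h1 : |if y' = y then pf φ y w else 0| ≤ 1 := by
    split_ifs with h
    · rw [abs_of_nonneg (pf_nonneg φ y w)]; exact pf_le_one φ y w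
    · simp
  have h2 : |pf φ y w * pf φ y' w| ≤ 1 := by
    rw [abs_mul, abs_of_nonneg (pf_nonneg φ y w), abs_of_nonneg (pf_nonneg φ y' w)]
    exact mul_le_one₀ (pf_le_one φ y w) (pf_nonneg φ y' w) (pf_le_one φ y' w)
  calc |qc φ y y' w| ≤ |if y' = y then pf φ y w else 0| + |pf φ y w * pf φ y' w| :=
        abs_sub _ _
    _ ≤ 1 + 1 := add_le_add h1 h2
    _ = 2 := by norm_num

lemma norm_Dp_le (φ : Y → F) {R : ℝ} (hR : ∀ y, ‖φ y‖ ≤ R) (y : Y) (w : F) :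
    ‖Dp φ y w‖ ≤ 2 * R * Fintype.card Y := by
  calc ‖Dp φ y w‖ ≤ ∑ y', ‖qc φ y y' w • innerSL ℝ (φ y')‖ := norm_sum_le _ _
    _ ≤ ∑ _y' : Y, 2 * R := by
        refine Finset.sum_le_sum fun y' _ => ?_
        refine (ContinuousLinearMap.opNorm_smul_le _ _).trans ?_
        rw [Real.norm_eq_abs, innerSL_apply_norm]
        exact mul_le_mul (abs_qc_le φ y y' w) (hR y') (norm_nonneg _) (by norm_num)
    _ = 2 * R * Fintype.card Y := by
        rw [Finset.sum_const, Finset.card_univ, nsmul_eq_mul, mul_comm]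

noncomputable def Dq (φ : Y → F) (y y' : Y) (w : F) : F →L[ℝ] ℝ :=
  (if y' = y then Dp φ y w else 0) - (pf φ y w • Dp φ y' w + pf φ y' w • Dp φ y w)

lemma hasFDerivAt_qc (φ : Y → F) (y y' : Y) (w : F) :
    HasFDerivAt (fun w => qc φ y y' w) (Dq φ y y' w) w := by
  have h1 : HasFDerivAt (fun w => if y' = y then pf φ y w else 0)
      (if y' = y then Dp φ y w else 0) w := by
    split_ifs with h
    · exact hasFDerivAt_pf φ y w
    · exact hasFDerivAt_const 0 w
  exact h1.sub ((hasFDerivAt_pf φ y w).mul (hasFDerivAt_pf φ y' w))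

lemma norm_Dq_le (φ : Y → F) {R : ℝ} (hR : ∀ y, ‖φ y‖ ≤ R) (hR0 : 0 ≤ R) (y y' : Y) (w : F) :
    ‖Dq φ y y' w‖ ≤ 6 * R * Fintype.card Y := by
  have hb : ∀ z : Y, ‖Dp φ z w‖ ≤ 2 * R * Fintype.card Y := fun z => norm_Dp_le φ hR z w
  have hbound : (0:ℝ) ≤ 2 * R * Fintype.card Y := by positivity
  have h1 : ‖if y' = y then Dp φ y w else 0‖ ≤ 2 * R * Fintype.card Y := by
    split_ifs with h
    · exact hb y
    · simpa using hbound
  have h2 : ‖pf φ y w • Dp φ y' w‖ ≤ 2 * R * Fintype.card Y := by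
    refine (ContinuousLinearMap.opNorm_smul_le _ _).trans ?_
    rw [Real.norm_eq_abs, abs_of_nonneg (pf_nonneg φ y w)]
    calc pf φ y w * ‖Dp φ y' w‖ ≤ 1 * (2 * R * Fintype.card Y) :=
          mul_le_mul (pf_le_one φ y w) (hb y') (norm_nonneg _) one_pos.le
      _ = 2 * R * Fintype.card Y := one_mul _
  have h3 : ‖pf φ y' w • Dp φ y w‖ ≤ 2 * R * Fintype.card Y := by
    refine (ContinuousLinearMap.opNorm_smul_le _ _).trans ?_
    rw [Real.norm_eq_abs, abs_of_nonneg (pf_nonneg φ y' w)]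
    calc pf φ y' w * ‖Dp φ y w‖ ≤ 1 * (2 * R * Fintype.card Y) :=
          mul_le_mul (pf_le_one φ y' w) (hb y) (norm_nonneg _) one_pos.le
      _ = 2 * R * Fintype.card Y := one_mul _
  calc ‖Dq φ y y' w‖ ≤ ‖if y' = y then Dp φ y w else 0‖ + ‖pf φ y w • Dp φ y' w + pf φ y' w • Dp φ y w‖ :=
        norm_sub_le _ _
    _ ≤ 2 * R * Fintype.card Y + (‖pf φ y w • Dp φ y' w‖ + ‖pf φ y' w • Dp φ y w‖) :=
        add_le_add h1 (norm_add_le _ _)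
    _ ≤ 2 * R * Fintype.card Y + (2 * R * Fintype.card Y + 2 * R * Fintype.card Y) := by
        exact add_le_add le_rfl (add_le_add h2 h3)
    _ = 6 * R * Fintype.card Y := by ring

noncomputable def bc (φ : Y → F) (Δ : Y → ℝ) (y' : Y) (w : F) : ℝ :=
  ∑ y, Δ y * qc φ y y' w

noncomputable def Db (φ : Y → F) (Δ : Y → ℝ) (y' : Y) (w : F) : F →L[ℝ] ℝ :=
  ∑ y, Δ y • Dq φ y y' w

lemma hasFDerivAt_bc (φ : Y → F) (Δ : Y → ℝ) (y' : Y) (w : F) :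
    HasFDerivAt (fun w => bc φ Δ y' w) (Db φ Δ y' w) w :=
  HasFDerivAt.fun_sum fun y _ => (hasFDerivAt_qc φ y y' w).const_mul (Δ y)

lemma norm_Db_le (φ : Y → F) (Δ : Y → ℝ) {R : ℝ} (hR : ∀ y, ‖φ y‖ ≤ R) (hR0 : 0 ≤ R)
    (hΔ : ∀ y, Δ y ∈ Set.Icc (0:ℝ) 1) (y' : Y) (w : F) :
    ‖Db φ Δ y' w‖ ≤ 6 * R * (Fintype.card Y : ℝ) ^ 2 := by
  calc ‖Db φ Δ y' w‖ ≤ ∑ y, ‖Δ y • Dq φ y y' w‖ := norm_sum_le _ _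
    _ ≤ ∑ _y : Y, 6 * R * Fintype.card Y := by
        refine Finset.sum_le_sum fun y _ => ?_
        refine (ContinuousLinearMap.opNorm_smul_le _ _).trans ?_
        rw [Real.norm_eq_abs, abs_of_nonneg (hΔ y).1]
        calc Δ y * ‖Dq φ y y' w‖ ≤ 1 * (6 * R * Fintype.card Y) :=
              mul_le_mul (hΔ y).2 (norm_Dq_le φ hR hR0 y y' w) (norm_nonneg _) one_pos.le
          _ = 6 * R * Fintype.card Y := one_mul _
    _ = 6 * R * (Fintype.card Y : ℝ) ^ 2 := by
        rw [Finset.sum_const, Finset.card_univ, nsmul_eq_mul]; ring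

lemma hasFDerivAt_J (φ : Y → F) (Δ : Y → ℝ) (w : F) :
    HasFDerivAt (fun w => ∑ y, Δ y * pf φ y w)
      (∑ y', bc φ Δ y' w • innerSL ℝ (φ y')) w := by
  have h : HasFDerivAt (fun w => ∑ y, Δ y * pf φ y w) (∑ y, Δ y • Dp φ y w) w :=
    HasFDerivAt.fun_sum fun y _ => (hasFDerivAt_pf φ y w).const_mul (Δ y)
  refine h.congr_fderiv ?_
  simp only [Dp, Finset.smul_sum, smul_smul, bc]
  rw [Finset.sum_comm]
  exact Finset.sum_congr rfl fun y' _ => (Finset.sum_smul).symm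

lemma norm_D2_le (φ : Y → F) (Δ : Y → ℝ) {R : ℝ} (hR : ∀ y, ‖φ y‖ ≤ R) (hR0 : 0 ≤ R)
    (hΔ : ∀ y, Δ y ∈ Set.Icc (0:ℝ) 1) (u : F) :
    ‖∑ y', (Db φ Δ y' u).smulRight (innerSL ℝ (φ y'))‖
      ≤ 6 * R ^ 2 * (Fintype.card Y : ℝ) ^ 3 := by
  refine ContinuousLinearMap.opNorm_le_bound _ (by positivity) fun x => ?_
  rw [ContinuousLinearMap.sum_apply]
  simp only [ContinuousLinearMap.smulRight_apply]
  calc ‖∑ y', Db φ Δ y' u x • innerSL ℝ (φ y')‖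
      ≤ ∑ y' : Y, ‖Db φ Δ y' u x • innerSL ℝ (φ y')‖ := norm_sum_le _ _
    _ ≤ ∑ _y' : Y, 6 * R * (Fintype.card Y : ℝ) ^ 2 * ‖x‖ * R := by
        refine Finset.sum_le_sum fun y' _ => ?_
        refine (ContinuousLinearMap.opNorm_smul_le _ _).trans ?_
        rw [innerSL_apply_norm]
        refine mul_le_mul ?_ (hR y') (norm_nonneg _) (by positivity)
        calc ‖Db φ Δ y' u x‖ ≤ ‖Db φ Δ y' u‖ * ‖x‖ := ContinuousLinearMap.le_opNorm _ _
          _ ≤ 6 * R * (Fintype.card Y : ℝ) ^ 2 * ‖x‖ :=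
              mul_le_mul_of_nonneg_right (norm_Db_le φ Δ hR hR0 hΔ y' u) (norm_nonneg _)
    _ = 6 * R ^ 2 * (Fintype.card Y : ℝ) ^ 3 * ‖x‖ := by
        rw [Finset.sum_const, Finset.card_univ, nsmul_eq_mul]; ring

end GradLipAux

open GradLipAux

theorem gradient_expected_loss_lipschitz
    {d : ℕ} {Y : Type*} [Fintype Y] [Nonempty Y]
    (φ : Y → EuclideanSpace ℝ (Fin d)) (Δ : Y → ℝ) (R : ℝ)
    (hR : ∀ y, ‖φ y‖ ≤ R)
    (hΔ : ∀ y, Δ y ∈ Set.Icc (0 : ℝ) 1)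
    (p : EuclideanSpace ℝ (Fin d) → Y → ℝ)
    (hp : ∀ w y, p w y = Real.exp ⟪w, φ y⟫ / ∑ y', Real.exp ⟪w, φ y'⟫)
    (J : EuclideanSpace ℝ (Fin d) → ℝ)
    (hJ : ∀ w, J w = ∑ y, Δ y * p w y) :
    ∃ L : ℝ, 0 ≤ L ∧
      ∀ w w' : EuclideanSpace ℝ (Fin d),
        ‖gradient J w - gradient J w'‖ ≤ L * ‖w - w'‖ := by
  classical
  have hR0 : 0 ≤ R := (norm_nonneg _).trans (hR (Classical.arbitrary Y))
  have hJ' : J = fun w => ∑ y, Δ y * pf φ y w := by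
    funext w
    rw [hJ w]
    exact Finset.sum_congr rfl fun y _ => by rw [hp w y]; rfl
  set n : ℝ := (Fintype.card Y : ℝ) with hn
  have hn0 : 0 ≤ n := Nat.cast_nonneg _
  refine ⟨6 * R ^ 2 * n ^ 3, by positivity, fun w w' => ?_⟩
  -- the first derivative of J
  have hDJ : ∀ u : EuclideanSpace ℝ (Fin d), HasFDerivAt J (∑ y', bc φ Δ y' u • innerSL ℝ (φ y')) u := by
    intro u; rw [hJ']; exact hasFDerivAt_J φ Δ u
  have hfderiv : fderiv ℝ J = fun u => ∑ y', bc φ Δ y' u • innerSL ℝ (φ y') :=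
    funext fun u => (hDJ u).fderiv
  -- second derivative
  have hD2 : ∀ u : EuclideanSpace ℝ (Fin d), HasFDerivAt (fderiv ℝ J)
      (∑ y', (Db φ Δ y' u).smulRight (innerSL ℝ (φ y'))) u := by
    intro u
    rw [hfderiv]
    exact HasFDerivAt.fun_sum fun y' _ => (hasFDerivAt_bc φ Δ y' u).smul_const (innerSL ℝ (φ y'))
  have hD2bound : ∀ u : EuclideanSpace ℝ (Fin d), ‖∑ y', (Db φ Δ y' u).smulRight (innerSL ℝ (φ y'))‖
      ≤ 6 * R ^ 2 * n ^ 3 := fun u => norm_D2_le φ Δ hR hR0 hΔ u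
  -- Lipschitz of fderiv J via mean value inequality
  have hlip : ‖fderiv ℝ J w - fderiv ℝ J w'‖ ≤ 6 * R ^ 2 * n ^ 3 * ‖w - w'‖ := by
    have := Convex.norm_image_sub_le_of_norm_hasFDerivWithin_le
      (f := fderiv ℝ J) (f' := fun u => ∑ y', (Db φ Δ y' u).smulRight (innerSL ℝ (φ y')))
      (s := Set.univ) (fun u _ => (hD2 u).hasFDerivWithinAt)
      (fun u _ => hD2bound u) convex_univ (Set.mem_univ w') (Set.mem_univ w)
    simpa using this
  -- from fderiv to gradient
  have hgrad : ‖gradient J w - gradient J w'‖ = ‖fderiv ℝ J w - fderiv ℝ J w'‖ := by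
    unfold gradient
    rw [← map_sub, LinearIsometryEquiv.norm_map]
  rw [hgrad]
  exact hlip
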